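/- Let q : ℝ → ℝⁿ be a C² curve satisfying the constraints. Then for every ν = 1,…,k and every time t, B̄_ν(t) = d/dt[(ᾱ_ν − α_ν)(q(t),v(t),t)] − ∑_{μ=1}^k (∂α_ν/∂q_{m+μ})(q,v,t)·(ᾱ_μ − α_μ)(q,v,t) + (∂α_ν/∂t)(q,v,t). -/

import Mathlib

open scoped BigOperators
noncomputable section
namespace NH

/-- The phase point `(q, v, t)` with `q : ℝⁿ` (n = m+k) and independent velocities `v : ℝᵐ`. -/
abbrev Pt (m k : ℕ) : Type := (Fin (m+k) → ℝ) × (Fin m → ℝ) × ℝ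

/-- The full phase point `(q, u, t)` with all velocities `u : ℝⁿ`. -/
abbrev PtL (m k : ℕ) : Type := (Fin (m+k) → ℝ) × (Fin (m+k) → ℝ) × ℝ

/-- Partial derivative of `f (q, w, t)` with respect to `q_i`. -/
def pq {n m' : ℕ} (f : (Fin n → ℝ) × (Fin m' → ℝ) × ℝ → ℝ) (i : Fin n)
    (x : (Fin n → ℝ) × (Fin m' → ℝ) × ℝ) : ℝ :=
  fderiv ℝ f x (Pi.single i 1, 0, 0)

/-- Partial derivative of `f (q, w, t)` with respect to the velocity variable `w_j`. -/
def pv {n m' : ℕ} (f : (Fin n → ℝ) × (Fin m' → ℝ) × ℝ → ℝ) (j : Fin m')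
    (x : (Fin n → ℝ) × (Fin m' → ℝ) × ℝ) : ℝ :=
  fderiv ℝ f x (0, Pi.single j 1, 0)

/-- Partial derivative of `f (q, w, t)` with respect to time `t`. -/
def pt {n m' : ℕ} (f : (Fin n → ℝ) × (Fin m' → ℝ) × ℝ → ℝ)
    (x : (Fin n → ℝ) × (Fin m' → ℝ) × ℝ) : ℝ :=
  fderiv ℝ f x (0, 0, 1)

/-- Partial derivative of `U (q, t)` with respect to `q_i`. -/
def pUq {n : ℕ} (U : (Fin n → ℝ) × ℝ → ℝ) (i : Fin n) (x : (Fin n → ℝ) × ℝ) : ℝ :=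
  fderiv ℝ U x (Pi.single i 1, 0)

/-- Partial derivative of `U (q, t)` with respect to `t`. -/
def pUt {n : ℕ} (U : (Fin n → ℝ) × ℝ → ℝ) (x : (Fin n → ℝ) × ℝ) : ℝ :=
  fderiv ℝ U x (0, 1)

variable {m k : ℕ}

/-- `û(q,v,t) = (v₁,…,vₘ, α₁(q,v,t),…,α_k(q,v,t))`. -/
def uhat (α : Fin k → Pt m k → ℝ) (x : Pt m k) : Fin (m+k) → ℝ :=
  Fin.append x.2.1 (fun ν => α ν x)

/-- The full phase point `(q, û(q,v,t), t)` associated to `(q,v,t)`. -/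
def Lpt (α : Fin k → Pt m k → ℝ) (x : Pt m k) : PtL m k :=
  (x.1, uhat α x, x.2.2)

/-- The restricted Lagrangian `L*(q,v,t) = L(q, û(q,v,t), t)`. -/
def Lstar (L : PtL m k → ℝ) (α : Fin k → Pt m k → ℝ) (x : Pt m k) : ℝ :=
  L (Lpt α x)

/-- `ᾱ_ν(q,v,t) = ∑_r v_r ∂α_ν/∂v_r`. -/
def abar (α : Fin k → Pt m k → ℝ) (ν : Fin k) (x : Pt m k) : ℝ :=
  ∑ r : Fin m, x.2.1 r * pv (α ν) r x

/-- The restricted energy `E*(q,v,t) = ∑_r v_r ∂L*/∂v_r − L*`. -/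
def Estar (L : PtL m k → ℝ) (α : Fin k → Pt m k → ℝ) (x : Pt m k) : ℝ :=
  ∑ r : Fin m, x.2.1 r * pv (Lstar L α) r x - Lstar L α x

/-- The energy `E(q,v,t) = ∑_i û_i (∂L/∂u_i)(q,û,t) − L*(q,v,t)`. -/
def En (L : PtL m k → ℝ) (α : Fin k → Pt m k → ℝ) (x : Pt m k) : ℝ :=
  ∑ i : Fin (m+k), uhat α x i * pv L i (Lpt α x) - Lstar L α x

/-- `q̇_i(t)`. -/
def qdot {n : ℕ} (q : ℝ → Fin n → ℝ) (t : ℝ) (i : Fin n) : ℝ :=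
  deriv (fun s => q s i) t

/-- The independent velocities `v(t) = (q̇₁,…,q̇ₘ)` along a curve. -/
def vel (m k : ℕ) (q : ℝ → Fin (m+k) → ℝ) (t : ℝ) (r : Fin m) : ℝ :=
  qdot q t (Fin.castAdd k r)

/-- The point `(q(t), v(t), t)` along a curve. -/
def along (m k : ℕ) (q : ℝ → Fin (m+k) → ℝ) (t : ℝ) : Pt m k :=
  (q t, vel m k q t, t)

/-- The curve satisfies the nonholonomic constraints: `q̇_{m+ν} = α_ν(q, v, t)`. -/
def Constrained (α : Fin k → Pt m k → ℝ) (q : ℝ → Fin (m+k) → ℝ) : Prop :=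
  ∀ (t : ℝ) (ν : Fin k), qdot q t (Fin.natAdd m ν) = α ν (along m k q t)

/-- The Voronec coefficients `B_rν(t)` along a constrained curve. -/
def Bco (α : Fin k → Pt m k → ℝ) (q : ℝ → Fin (m+k) → ℝ) (r : Fin m) (ν : Fin k) (t : ℝ) : ℝ :=
  deriv (fun s => pv (α ν) r (along m k q s)) t
    - pq (α ν) (Fin.castAdd k r) (along m k q t)
    - ∑ μ : Fin k, pv (α μ) r (along m k q t) * pq (α ν) (Fin.natAdd m μ) (along m k q t)

/-- The Voronec equations of motion along a constrained curve. -/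
def Voronec (L : PtL m k → ℝ) (α : Fin k → Pt m k → ℝ) (q : ℝ → Fin (m+k) → ℝ) : Prop :=
  ∀ (r : Fin m) (t : ℝ),
    deriv (fun s => pv (Lstar L α) r (along m k q s)) t
      - pq (Lstar L α) (Fin.castAdd k r) (along m k q t)
      - ∑ ν : Fin k, pq (Lstar L α) (Fin.natAdd m ν) (along m k q t) * pv (α ν) r (along m k q t)
      - ∑ ν : Fin k, Bco α q r ν t * pv L (Fin.natAdd m ν) (Lpt α (along m k q t)) = 0


lemma clm_decomp {m k : ℕ} (φ : Pt m k →L[ℝ] ℝ) (u : Fin (m+k) → ℝ) (w : Fin m → ℝ) (c : ℝ) :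
    φ (u, w, c) = ∑ i : Fin (m+k), u i * φ (Pi.single i 1, 0, 0)
      + ∑ r : Fin m, w r * φ (0, Pi.single r 1, 0) + c * φ (0, 0, 1) := by
  have h : (u, w, c) = (∑ i : Fin (m+k), u i • ((Pi.single i 1 : Fin (m+k) → ℝ), (0 : Fin m → ℝ), (0:ℝ)))
      + (∑ r : Fin m, w r • ((0 : Fin (m+k) → ℝ), (Pi.single r 1 : Fin m → ℝ), (0:ℝ)))
      + c • ((0 : Fin (m+k) → ℝ), (0 : Fin m → ℝ), (1:ℝ)) := by
    refine Prod.ext ?_ (Prod.ext ?_ ?_) <;>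
      simp [Prod.fst_sum, Prod.snd_sum] <;>
      · funext j
        simp [Finset.sum_apply, Pi.single_apply]
  rw [h, map_add, map_add, map_sum, map_sum, map_smul]
  simp only [map_smul, smul_eq_mul]

lemma fderiv_decomp {m k : ℕ} (f : Pt m k → ℝ) (x : Pt m k)
    (u : Fin (m+k) → ℝ) (w : Fin m → ℝ) (c : ℝ) :
    (fderiv ℝ f x) (u, w, c)
      = ∑ i : Fin (m+k), u i * pq f i x + ∑ r : Fin m, w r * pv f r x + c * pt f x :=
  clm_decomp (fderiv ℝ f x) u w c


lemma algebra_key {m k : ℕ} (v D P W : Fin m → ℝ) (Q A : Fin k → ℝ)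
    (Vv : Fin k → Fin m → ℝ) (T : ℝ) :
    ∑ x : Fin m, (D x - P x - ∑ μ : Fin k, Vv μ x * Q μ) * v x
      = ∑ r : Fin m, (W r + v r * D r)
        - (∑ i : Fin m, v i * P i + ∑ x : Fin k, A x * Q x + ∑ r : Fin m, W r + 1 * T)
        - ∑ x : Fin k, Q x * (∑ r : Fin m, v r * Vv x r - A x) + T := by
  simp only [sub_mul, mul_sub, Finset.sum_sub_distrib, Finset.sum_add_distrib,
    Finset.sum_mul, Finset.mul_sum, one_mul]
  rw [Finset.sum_comm (f := fun x μ => Vv μ x * Q μ * v x)]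
  ring_nf
  rw [Finset.sum_congr rfl (fun x _ => mul_comm (D x) (v x)),
    Finset.sum_congr rfl (fun x _ => mul_comm (P x) (v x)),
    Finset.sum_congr rfl (fun x _ => mul_comm (A x) (Q x)),
    Finset.sum_congr rfl (fun (x : Fin k) _ =>
      Finset.sum_congr rfl (fun (y : Fin m) _ =>
        (by ring : Vv x y * Q x * v y = Q x * v y * Vv x y)))]
  ring

theorem Bbar_formula (m k : ℕ) (hm : 0 < m) (hk : 0 < k)
    (α : Fin k → Pt m k → ℝ) (hα : ∀ ν, ContDiff ℝ 2 (α ν))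
    (q : ℝ → Fin (m+k) → ℝ) (hq : ContDiff ℝ 2 q)
    (hcon : Constrained α q)
 :
    ∀ (ν : Fin k) (t : ℝ),
      ∑ r : Fin m, Bco α q r ν t * vel m k q t r
        = deriv (fun s => abar α ν (along m k q s) - α ν (along m k q s)) t
          - ∑ μ : Fin k,
              pq (α ν) (Fin.natAdd m μ) (along m k q t)
                * (abar α μ (along m k q t) - α μ (along m k q t))
          + pt (α ν) (along m k q t) := by
  intro ν t
  have hqi : ∀ i, ContDiff ℝ 2 (fun s => q s i) := fun i => contDiff_pi.mp hq i
  have hα1 : ∀ μ, Differentiable ℝ (α μ) := fun μ => (hα μ).differentiable two_ne_zero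
  have hQ : HasDerivAt q (qdot q t) t :=
    hasDerivAt_pi.mpr (fun i => (((hqi i).differentiable two_ne_zero) t).hasDerivAt)
  have hvelC : ∀ r : Fin m, ContDiff ℝ 1 (fun s => vel m k q s r) := by
    intro r
    have h2 : ContDiff ℝ ((1:WithTop ℕ∞)+1) (fun s => q s (Fin.castAdd k r)) := by
      exact (by norm_num : ((1:WithTop ℕ∞)+1) = 2) ▸ hqi _
    exact (contDiff_succ_iff_deriv.mp h2).2.2
  set a : Fin m → ℝ := fun r => deriv (fun s => vel m k q s r) t with ha
  have hV : HasDerivAt (fun s => vel m k q s) a t :=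
    hasDerivAt_pi.mpr (fun r => (((hvelC r).differentiable one_ne_zero) t).hasDerivAt)
  have hAl : HasDerivAt (along m k q) (qdot q t, a, 1) t :=
    hQ.prodMk (hV.prodMk (hasDerivAt_id t))
  have hpvC : ∀ (μ : Fin k) (r : Fin m), ContDiff ℝ 1 (pv (α μ) r) := by
    intro μ r
    exact ((hα μ).fderiv_right (by norm_num)).clm_apply contDiff_const
  have hpvd : ∀ r : Fin m, HasDerivAt (fun s => pv (α ν) r (along m k q s))
      (deriv (fun s => pv (α ν) r (along m k q s)) t) t := by
    intro r
    have hd : DifferentiableAt ℝ (fun s => pv (α ν) r (along m k q s)) t :=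
      ((((hpvC ν r).differentiable one_ne_zero) (along m k q t)).comp t hAl.differentiableAt)
    exact hd.hasDerivAt
  have hαAl : HasDerivAt (fun s => α ν (along m k q s))
      ((fderiv ℝ (α ν) (along m k q t)) (qdot q t, a, 1)) t :=
    ((hα1 ν (along m k q t)).hasFDerivAt.comp_hasDerivAt t hAl)
  have habarAl : HasDerivAt (fun s => abar α ν (along m k q s))
      (∑ r : Fin m, (a r * pv (α ν) r (along m k q t)
        + vel m k q t r * deriv (fun s => pv (α ν) r (along m k q s)) t)) t := by
    have heq : (fun s => abar α ν (along m k q s))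
        = fun s => ∑ r : Fin m, vel m k q s r * pv (α ν) r (along m k q s) := rfl
    rw [heq]
    exact HasDerivAt.fun_sum (fun r _ => (hasDerivAt_pi.mp hV r).mul (hpvd r))
  have hderiv : deriv (fun s => abar α ν (along m k q s) - α ν (along m k q s)) t
      = (∑ r : Fin m, (a r * pv (α ν) r (along m k q t)
          + vel m k q t r * deriv (fun s => pv (α ν) r (along m k q s)) t))
        - (fderiv ℝ (α ν) (along m k q t)) (qdot q t, a, 1) := (habarAl.sub hαAl).deriv
  rw [hderiv, fderiv_decomp, Fin.sum_univ_add (f := fun i => qdot q t i * pq (α ν) i (along m k q t))]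
  simp only [hcon t]
  simp only [Bco, abar]
  exact algebra_key (vel m k q t)
    (fun r => deriv (fun s => pv (α ν) r (along m k q s)) t)
    (fun r => pq (α ν) (Fin.castAdd k r) (along m k q t))
    (fun r => a r * pv (α ν) r (along m k q t))
    (fun μ => pq (α ν) (Fin.natAdd m μ) (along m k q t))
    (fun μ => α μ (along m k q t))
    (fun μ r => pv (α μ) r (along m k q t))
    (pt (α ν) (along m k q t))


end NH
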